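/- For n ≥ 1, the number of functions t : {0,1,…,n-1} → {0,1,…,n-1} for which there is no index i ≥ 0 with t^{i+1}(0) = t^{i}(0) (equivalently, the eventually periodic orbit of 0 under iteration of t has period at least 2) equals ∑_{j=2}^{n} ((n-1)!/(n-j)!) · (j-1) · n^{n-j}. -/

import Mathlib

/-- The left quotient of a language `L` by a word `w`: `{x | w ++ x ∈ L}`. -/
def leftQ {α : Type*} (L : Set (List α)) (w : List α) : Set (List α) :=
  {x | w ++ x ∈ L}

/-- Quotient (state) complexity: the number of distinct left quotients of `L`. -/
noncomputable def quotCompl {α : Type*} (L : Set (List α)) : ℕ :=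
  Nat.card (Set.range (leftQ L))

/-- The syntactic (Myhill) congruence of `L`. -/
def synRel {α : Type*} (L : Set (List α)) (x y : List α) : Prop :=
  ∀ u v : List α, u ++ x ++ v ∈ L ↔ u ++ y ++ v ∈ L

/-- The syntactic setoid on the free semigroup of non-empty words. -/
def synSetoid {α : Type*} (L : Set (List α)) : Setoid {w : List α // w ≠ []} :=
  ⟨fun x y => synRel L x.1 y.1,
   ⟨fun _ _ _ => Iff.rfl, fun h u v => (h u v).symm,
    fun h₁ h₂ u v => (h₁ u v).trans (h₂ u v)⟩⟩

/-- Syntactic complexity: the cardinality of the syntactic semigroup of `L`. -/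
noncomputable def synCompl {α : Type*} (L : Set (List α)) : ℕ :=
  Nat.card (Quotient (synSetoid L))

/-- `L` is a right ideal: it is non-empty and `L = LΣ*`. -/
def IsRightIdeal {α : Type*} (L : Set (List α)) : Prop :=
  L.Nonempty ∧ L = {x | ∃ u ∈ L, ∃ v : List α, x = u ++ v}

/-- `L` is a left ideal: it is non-empty and `L = Σ*L`. -/
def IsLeftIdeal {α : Type*} (L : Set (List α)) : Prop :=
  L.Nonempty ∧ L = {x | ∃ u : List α, ∃ v ∈ L, x = u ++ v}

/-- `L` is a two-sided ideal: it is non-empty and `L = Σ*LΣ*`. -/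
def IsTwoSidedIdeal {α : Type*} (L : Set (List α)) : Prop :=
  L.Nonempty ∧ L = {x | ∃ u : List α, ∃ w ∈ L, ∃ v : List α, x = u ++ w ++ v}

/-- The reverse of a language. -/
def langReverse {α : Type*} (L : Set (List α)) : Set (List α) :=
  List.reverse '' L


namespace Stmt14

open Finset Function

attribute [local instance] Classical.propDecidable

variable {n : ℕ}

def orb (t : Fin (n+1) → Fin (n+1)) (i : ℕ) : Fin (n+1) := t^[i] 0

lemma orb_succ (t : Fin (n+1) → Fin (n+1)) (i : ℕ) : orb t (i+1) = t (orb t i) :=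
  Function.iterate_succ_apply' t i 0

lemma exRep (t : Fin (n+1) → Fin (n+1)) : ∃ m, ∃ i < m, orb t i = orb t m := by
  obtain ⟨x, y, hxy, h⟩ := Finite.exists_ne_map_eq_of_infinite (orb t)
  rcases hxy.lt_or_gt with h' | h'
  · exact ⟨y, x, h', h⟩
  · exact ⟨x, y, h', h.symm⟩

noncomputable def J (t : Fin (n+1) → Fin (n+1)) : ℕ := Nat.find (exRep t)

lemma J_spec (t : Fin (n+1) → Fin (n+1)) : ∃ i < J t, orb t i = orb t (J t) :=
  Nat.find_spec (exRep t)

noncomputable def R (t : Fin (n+1) → Fin (n+1)) : ℕ := Nat.find (J_spec t)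

lemma R_lt (t : Fin (n+1) → Fin (n+1)) : R t < J t := (Nat.find_spec (J_spec t)).1

lemma orb_R (t : Fin (n+1) → Fin (n+1)) : orb t (R t) = orb t (J t) :=
  (Nat.find_spec (J_spec t)).2

lemma R_min (t : Fin (n+1) → Fin (n+1)) : ∀ i < R t, orb t i ≠ orb t (J t) :=
  fun i hi h => Nat.find_min (J_spec t) hi ⟨hi.trans (R_lt t), h⟩

lemma orb_ne (t : Fin (n+1) → Fin (n+1)) {i m : ℕ} (him : i < m) (hm : m < J t) :
    orb t i ≠ orb t m :=
  fun h => Nat.find_min (exRep t) hm ⟨i, him, h⟩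

lemma orb_ne' (t : Fin (n+1) → Fin (n+1)) {i m : ℕ} (him : i ≠ m) (hi : i < J t)
    (hm : m < J t) : orb t i ≠ orb t m := by
  rcases him.lt_or_gt with h | h
  · exact orb_ne t h hm
  · exact fun he => orb_ne t h hi he.symm

lemma J_pos (t : Fin (n+1) → Fin (n+1)) : 1 ≤ J t := by
  obtain ⟨i, hi, -⟩ := J_spec t; omega

lemma J_le (t : Fin (n+1) → Fin (n+1)) : J t ≤ n + 1 := by
  have hinj : Function.Injective (fun i : Fin (J t) => orb t i.1) := by
    intro i₁ i₂ h
    by_contra hne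
    exact orb_ne' t (fun he => hne (Fin.ext he)) i₁.2 i₂.2 h
  simpa using Fintype.card_le_of_injective _ hinj

lemma orb_per (t : Fin (n+1) → Fin (n+1)) (s : ℕ) :
    orb t (s + J t) = orb t (s + R t) := by
  show t^[s + J t] 0 = t^[s + R t] 0
  rw [Function.iterate_add_apply, Function.iterate_add_apply]
  exact congrArg _ (orb_R t).symm

lemma orb_mod (t : Fin (n+1) → Fin (n+1)) :
    ∀ k, R t ≤ k → orb t k = orb t (R t + (k - R t) % (J t - R t)) := by
  have hp : 0 < J t - R t := by have := R_lt t; omega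
  intro k
  induction k using Nat.strong_induction_on with
  | _ k IH =>
    intro hk
    by_cases h : k < J t
    · have : (k - R t) % (J t - R t) = k - R t := Nat.mod_eq_of_lt (by omega)
      rw [this]; congr 1; omega
    · push_neg at h
      have h1 : orb t k = orb t (k - (J t - R t)) := by
        have := orb_per t (k - J t)
        have e1 : k - J t + J t = k := by omega
        have e2 : k - J t + R t = k - (J t - R t) := by have := R_lt t; omega
        rw [e1, e2] at this; exact this
      have h2 := IH (k - (J t - R t)) (by omega) (by have := R_lt t; omega)
      rw [h1, h2]
      congr 2
      have e3 : k - R t = (k - (J t - R t) - R t) + (J t - R t) := by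
        have := R_lt t; omega
      rw [e3, Nat.add_mod_right]

lemma aper_iff (t : Fin (n+1) → Fin (n+1)) :
    (∃ i, orb t (i+1) = orb t i) ↔ orb t (J t) = orb t (J t - 1) := by
  constructor
  · rintro ⟨i, hi⟩
    by_contra hne
    have hR1 : R t < J t - 1 := by
      have h1 := R_lt t
      have h2 : R t ≠ J t - 1 := fun h => hne (h ▸ (orb_R t)).symm
      omega
    set p := J t - R t with hpdef
    have hp2 : 2 ≤ p := by omega
    have hiJ : J t ≤ i + 1 := by
      by_contra h
      exact orb_ne t (Nat.lt_succ_self i) (by omega) hi.symm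
    have hiR : R t ≤ i := by have := J_pos t; omega
    have e1 := orb_mod t i hiR
    have e2 := orb_mod t (i+1) (by omega)
    have ex : i + 1 - R t = (i - R t) + 1 := by omega
    rw [ex] at e2
    set x := i - R t
    have m1 : x % p < p := Nat.mod_lt _ (by omega)
    have m2 : (x+1) % p < p := Nat.mod_lt _ (by omega)
    have hmodne : (x+1) % p ≠ x % p := by
      intro h
      have : x % p = (x+1) % p := h.symm
      have hd : p ∣ (x + 1 - x) := (Nat.modEq_iff_dvd' (Nat.le_succ x)).mp this
      simp at hd
      omega
    have := orb_ne' t (i := R t + (x+1) % p) (m := R t + x % p)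
      (by omega) (by omega) (by omega)
    rw [← e1, ← e2] at this
    exact this hi
  · intro h
    exact ⟨J t - 1, by rw [Nat.sub_add_cancel (J_pos t)]; exact h⟩

lemma bad_iff (t : Fin (n+1) → Fin (n+1)) :
    (¬ ∃ i, orb t (i+1) = orb t i) ↔ R t < J t - 1 := by
  rw [aper_iff]
  constructor
  · intro hne
    have h1 := R_lt t
    have h2 : R t ≠ J t - 1 := fun h => hne (h ▸ (orb_R t)).symm
    omega
  · intro hlt he
    have := orb_ne t (i := R t) (m := J t - 1) hlt (by have := J_pos t; omega)
    exact this ((orb_R t).trans he)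

def eqA (j : ℕ) (h0 : 0 < j) :
    {a : Fin j → Fin (n+1) // Function.Injective a ∧ a ⟨0, h0⟩ = 0} ≃
      (Fin (j-1) ↪ {x : Fin (n+1) // x ≠ 0}) where
  toFun a := ⟨fun i => ⟨a.1 ⟨i.1+1, by omega⟩, fun h => by
      have := a.2.1 (h.trans a.2.2.symm)
      simp [Fin.ext_iff] at this⟩,
    fun i₁ i₂ h => by
      have := a.2.1 (Subtype.ext_iff.mp h)
      simp only [Fin.mk.injEq, Nat.add_right_cancel_iff] at this
      exact Fin.ext this⟩
  invFun g := ⟨fun i => if h : i.1 = 0 then 0 else (g ⟨i.1 - 1, by omega⟩).1,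
    by
      constructor
      · intro i₁ i₂ h
        dsimp only at h
        by_cases h1 : i₁.1 = 0 <;> by_cases h2 : i₂.1 = 0
        · exact Fin.ext (h1.trans h2.symm)
        · rw [dif_pos h1, dif_neg h2] at h
          exact absurd h.symm (g ⟨i₂.1 - 1, by omega⟩).2
        · rw [dif_neg h1, dif_pos h2] at h
          exact absurd h (g ⟨i₁.1 - 1, by omega⟩).2
        · rw [dif_neg h1, dif_neg h2] at h
          have := g.injective (Subtype.ext h)
          simp only [Fin.mk.injEq] at this
          exact Fin.ext (by omega)
      · simp⟩
  left_inv a := by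
    apply Subtype.ext
    funext i
    by_cases h : i.1 = 0
    · simp only [dif_pos h]
      exact (a.2.2.symm.trans (congrArg a.1 (Fin.ext h.symm)))
    · simp only [dif_neg h, Function.Embedding.coeFn_mk]
      exact congrArg a.1 (Fin.ext (by show i.1 - 1 + 1 = i.1; omega))
  right_inv g := by
    apply DFunLike.ext
    intro i
    apply Subtype.ext
    simp only [Function.Embedding.coeFn_mk]
    rw [dif_neg (by omega : ¬ (i.1 + 1 = 0))]
    exact congrArg (fun z => (g z).1) (Fin.ext (by show i.1 + 1 - 1 = i.1; omega))

lemma cardA (j : ℕ) (h0 : 0 < j) :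
    (univ.filter fun a : Fin j → Fin (n+1) =>
        Function.Injective a ∧ a ⟨0, h0⟩ = 0).card = n.descFactorial (j-1) := by
  rw [← Fintype.card_subtype]
  rw [Fintype.card_congr (eqA j h0)]
  rw [Fintype.card_embedding_eq]
  congr 1
  · rw [Fintype.card_subtype_compl]
    simp
  · simp

lemma fiber_card (j : ℕ) (hjn : j ≤ n+1) (a : Fin j → Fin (n+1))
    (ha1 : Function.Injective a) (w : Fin j → Fin (n+1)) :
    (univ.filter fun t : Fin (n+1) → Fin (n+1) => ∀ i : Fin j, t (a i) = w i).card
      = (n+1) ^ (n+1-j) := by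
  have key : (univ.filter fun t : Fin (n+1) → Fin (n+1) => ∀ i : Fin j, t (a i) = w i)
      = Fintype.piFinset (fun x : Fin (n+1) =>
          if h : ∃ i, a i = x then {w h.choose} else univ) := by
    ext t
    simp only [mem_filter, mem_univ, true_and, Fintype.mem_piFinset]
    constructor
    · intro H x
      split_ifs with h
      · obtain ⟨i0, hi0⟩ := id h
        have hc : h.choose = i0 := ha1 (h.choose_spec.trans hi0.symm)
        rw [Finset.mem_singleton, hc, ← hi0]
        exact H i0
      · exact mem_univ _
    · intro H i
      have h : ∃ i', a i' = a i := ⟨i, rfl⟩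
      have := H (a i)
      rw [dif_pos h, Finset.mem_singleton] at this
      rwa [ha1 h.choose_spec] at this
  rw [key, Fintype.card_piFinset]
  have : ∀ x : Fin (n+1),
      (if h : ∃ i, a i = x then ({w h.choose} : Finset (Fin (n+1))) else univ).card
        = if ∃ i, a i = x then 1 else (n+1) := by
    intro x; split_ifs with h <;> simp
  rw [Finset.prod_congr rfl (fun x _ => this x)]
  rw [Finset.prod_ite, Finset.prod_const, Finset.prod_const, one_pow, one_mul]
  congr 1
  have h1 : (univ.filter fun x : Fin (n+1) => ∃ i, a i = x) = Finset.image a univ := by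
    ext x; simp [eq_comm]
  have h2 := Finset.card_filter_add_card_filter_not
    (s := (univ : Finset (Fin (n+1)))) (p := fun x => ∃ i, a i = x)
  have h3 : (univ.filter fun x : Fin (n+1) => ∃ i, a i = x).card = j := by
    rw [h1, Finset.card_image_of_injective _ ha1]; simp
  simp only [Finset.card_univ, Fintype.card_fin] at h2
  omega

def vf (j : ℕ) (a : Fin j → Fin (n+1)) (r : ℕ) (hr : r < j) : Fin j → Fin (n+1) :=
  fun i => if h : i.1 + 1 < j then a ⟨i.1 + 1, h⟩ else a ⟨r, hr⟩

lemma fiber_iff (j : ℕ) (h0j : 0 < j) (a : Fin j → Fin (n+1))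
    (ha1 : Function.Injective a) (ha0 : a ⟨0, h0j⟩ = 0) (r : ℕ) (hr : r < j - 1)
    (hrj : r < j) (t : Fin (n+1) → Fin (n+1)) :
    (((¬ ∃ i, orb t (i+1) = orb t i) ∧ J t = j) ∧
      ((fun i : Fin j => orb t i.1) = a ∧ R t = r)) ↔
    (∀ i : Fin j, t (a i) = vf j a r hrj i) := by
  constructor
  · rintro ⟨⟨hbad, hJ⟩, hvec, hR⟩ i
    have hov : ∀ i : Fin j, orb t i.1 = a i := fun i => congrFun hvec i
    have h1 : t (a i) = orb t (i.1 + 1) := by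
      rw [← hov i]; exact (orb_succ t i.1).symm
    by_cases h : i.1 + 1 < j
    · rw [h1, vf, dif_pos h]
      exact hov ⟨i.1 + 1, h⟩
    · have hij : i.1 + 1 = j := by have := i.2; omega
      rw [vf, dif_neg h]
      calc t (a i) = orb t (i.1 + 1) := h1
        _ = orb t (J t) := by rw [hij, hJ]
        _ = orb t (R t) := (orb_R t).symm
        _ = orb t r := by rw [hR]
        _ = a ⟨r, hrj⟩ := hov ⟨r, hrj⟩
  · intro hv
    have horb : ∀ k, (hk : k < j) → orb t k = a ⟨k, hk⟩ := by
      intro k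
      induction k with
      | zero => intro hk; exact ha0.symm
      | succ k IH =>
        intro hk
        have hk' : k < j := by omega
        rw [orb_succ, IH hk']
        have h2 := hv ⟨k, hk'⟩
        rwa [vf, dif_pos (show (⟨k, hk'⟩ : Fin j).1 + 1 < j from hk)] at h2
    have horbj : orb t j = a ⟨r, hrj⟩ := by
      have hj1 : j - 1 < j := by omega
      have e : orb t j = t (orb t (j-1)) := by
        have h3 := orb_succ t (j-1)
        rw [show j - 1 + 1 = j from by omega] at h3
        exact h3
      rw [e, horb (j-1) hj1, hv ⟨j-1, hj1⟩, vf,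
        dif_neg (show ¬ ((⟨j-1, hj1⟩ : Fin j).1 + 1 < j) from by
          show ¬ (j - 1 + 1 < j); omega)]
    have hJ : J t = j := by
      have hub : J t ≤ j :=
        Nat.find_le ⟨r, by omega, by rw [horbj, horb r hrj]⟩
      have hlb : ¬ (J t < j) := by
        intro h
        obtain ⟨i, him, he⟩ := J_spec t
        rw [horb i (by omega), horb (J t) h] at he
        have := ha1 he
        simp only [Fin.mk.injEq] at this
        omega
      omega
    have hR : R t = r := by
      have h1 : R t < j := by rw [← hJ]; exact R_lt t
      have h2 : orb t (R t) = orb t j := by rw [orb_R t, hJ]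
      rw [horb (R t) h1, horbj] at h2
      have := ha1 h2
      simpa using this
    refine ⟨⟨?_, hJ⟩, funext fun i => horb i.1 i.2, hR⟩
    rw [bad_iff, hJ, hR]
    exact hr

theorem count_bad (n : ℕ) :
    (univ.filter fun t : Fin (n+1) → Fin (n+1) => ¬ ∃ i, orb t (i+1) = orb t i).card
      = ∑ j ∈ Icc 2 (n+1), n.descFactorial (j-1) * ((j-1) * (n+1)^(n+1-j)) := by
  set F := univ.filter fun t : Fin (n+1) → Fin (n+1) => ¬ ∃ i, orb t (i+1) = orb t i
    with hF
  have hmem : ∀ t ∈ F, J t ∈ Icc 2 (n+1) := by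
    intro t ht
    rw [hF, mem_filter] at ht
    have := (bad_iff t).mp ht.2
    simp only [mem_Icc]
    exact ⟨by omega, J_le t⟩
  rw [card_eq_sum_card_fiberwise hmem]
  refine Finset.sum_congr rfl ?_
  intro j hj
  rw [mem_Icc] at hj
  obtain ⟨hj2, hjn⟩ := hj
  have h0j : 0 < j := by omega
  set Afin := ((univ.filter fun a : Fin j → Fin (n+1) =>
      Function.Injective a ∧ a ⟨0, h0j⟩ = 0) ×ˢ Finset.range (j-1)) with hAfin
  have hmem2 : ∀ t ∈ F.filter (fun t => J t = j),
      ((fun i : Fin j => orb t i.1, R t) : (Fin j → Fin (n+1)) × ℕ) ∈ Afin := by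
    intro t ht
    simp only [hF, mem_filter, mem_univ, true_and, Finset.filter_filter] at ht
    obtain ⟨hbad, hJ⟩ := ht
    have hRlt := (bad_iff t).mp hbad
    rw [hAfin, Finset.mem_product]
    refine ⟨?_, by simp only [mem_range]; omega⟩
    simp only [mem_filter, mem_univ, true_and]
    refine ⟨?_, rfl⟩
    intro i₁ i₂ h
    by_contra hne
    exact orb_ne' t (fun he => hne (Fin.ext he))
      (by rw [hJ]; exact i₁.2) (by rw [hJ]; exact i₂.2) h
  rw [card_eq_sum_card_fiberwise hmem2]
  have hfib : ∀ p ∈ Afin, ((F.filter (fun t => J t = j)).filter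
      (fun t => ((fun i : Fin j => orb t i.1, R t) :
        (Fin j → Fin (n+1)) × ℕ) = p)).card = (n+1)^(n+1-j) := by
    rintro ⟨a, r⟩ hp
    rw [hAfin, Finset.mem_product, mem_filter, mem_range] at hp
    obtain ⟨⟨-, ha1, ha0⟩, hr⟩ := hp
    have hrj : r < j := by omega
    have heq : (F.filter (fun t => J t = j)).filter
        (fun t => ((fun i : Fin j => orb t i.1, R t) :
          (Fin j → Fin (n+1)) × ℕ) = (a, r))
        = univ.filter (fun t => ∀ i : Fin j, t (a i) = vf j a r hrj i) := by
      rw [hF, Finset.filter_filter, Finset.filter_filter]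
      apply Finset.filter_congr
      intro t _
      rw [← fiber_iff j h0j a ha1 ha0 r hr hrj t]
      simp only [Prod.mk.injEq]
      tauto
    rw [heq, fiber_card j hjn a ha1 _]
  rw [Finset.sum_congr rfl hfib, Finset.sum_const, hAfin, Finset.card_product,
    cardA j h0j, Finset.card_range, smul_eq_mul, mul_assoc]

end Stmt14

/-- For `n ≥ 1`, the number of transformations
`t : {0,…,n-1} → {0,…,n-1}` whose behavior on `0` is *not* aperiodic (there is
no `i` with `t^{i+1}(0) = t^i(0)`) equals
`∑_{j=2}^n (n-1)!/(n-j)! ⬝ (j-1) ⬝ n^{n-j}`. -/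
theorem stmt_14 (n : ℕ) (hn : 1 ≤ n) :
    Nat.card {t : Fin n → Fin n //
        ¬ ∃ i : ℕ, t^[i + 1] ⟨0, hn⟩ = t^[i] ⟨0, hn⟩} =
      ∑ j ∈ Finset.Icc 2 n,
        (Nat.factorial (n - 1) / Nat.factorial (n - j)) * (j - 1) * n ^ (n - j) := by
  classical
  obtain ⟨m, rfl⟩ : ∃ m, n = m + 1 := ⟨n - 1, by omega⟩
  have h0 : (⟨0, hn⟩ : Fin (m+1)) = 0 := by ext; simp
  simp only [h0]
  rw [Nat.card_eq_fintype_card, Fintype.card_subtype]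
  have hcb := Stmt14.count_bad m
  simp only [Stmt14.orb] at hcb
  refine (Eq.trans ?_ hcb).trans ?_
  · congr 1
  refine Finset.sum_congr rfl ?_
  intro j hj
  rw [Finset.mem_Icc] at hj
  rw [Nat.descFactorial_eq_div (by omega : j - 1 ≤ m)]
  rw [show m - (j - 1) = m + 1 - j from by omega]
  rw [show m + 1 - 1 = m from by omega]
  ring
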